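/- For real x with |x| < 1, ∑_{n=2}^∞ H_n (ζ(n) − x ζ(n+1)) x^n = ζ(2) x² − γ x + log Γ(1 − x). -/

import Mathlib

open Filter Topology Finset

noncomputable def zr (m : ℕ) : ℝ := ∑' k : ℕ, 1 / (k + 1 : ℝ) ^ m

lemma summable_zr_fun {m : ℕ} (hm : 2 ≤ m) : Summable (fun k : ℕ => 1 / (k + 1 : ℝ) ^ m) := by
  have := (Real.summable_one_div_nat_pow (p := m)).mpr hm
  have h2 := (summable_nat_add_iff 1).mpr this
  simpa using h2

lemma hgeo {x : ℝ} (hx : |x| < 1) : Summable (fun i : ℕ => |x| ^ (i + 2)) := by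
  have := (summable_geometric_of_lt_one (abs_nonneg x) hx).mul_left (|x| ^ 2)
  refine this.congr fun i => ?_
  rw [← pow_add]; ring_nf

lemma hj2 : Summable (fun j : ℕ => (1 / ((j:ℝ) + 2)) ^ 2) := by
  have := (Real.summable_one_div_nat_pow (p := 2)).mpr (by norm_num)
  have h2 := (summable_nat_add_iff 2).mpr this
  refine h2.congr fun j => ?_
  push_cast
  rw [div_pow]
  norm_num

lemma hFsummable {x : ℝ} (hx : |x| < 1) :
    Summable (fun p : ℕ × ℕ => (x / ((p.1 : ℝ) + 2)) ^ (p.2 + 2) / ((p.2 : ℝ) + 2)) := by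
  have hprod : Summable (fun p : ℕ × ℕ => (1 / ((p.1:ℝ) + 2)) ^ 2 * |x| ^ (p.2 + 2)) :=
    Summable.mul_of_nonneg (f := fun j : ℕ => (1 / ((j:ℝ) + 2)) ^ 2)
      (g := fun i : ℕ => |x| ^ (i + 2)) hj2 (hgeo hx)
      (fun j => by positivity) (fun i => by positivity)
  refine Summable.of_norm_bounded hprod ?_
  rintro ⟨j, i⟩
  have hj : (0:ℝ) < (j:ℝ) + 2 := by positivity
  have hi : (1:ℝ) ≤ (i:ℝ) + 2 := by linarith [Nat.cast_nonneg (α := ℝ) i]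
  rw [Real.norm_eq_abs, abs_div, abs_pow, abs_div, abs_of_pos hj,
    abs_of_pos (by linarith : (0:ℝ) < (i:ℝ)+2)]
  calc (|x| / ((j:ℝ)+2)) ^ (i+2) / ((i:ℝ)+2) ≤ (|x| / ((j:ℝ)+2)) ^ (i+2) :=
        div_le_self (by positivity) hi
    _ = (1 / ((j:ℝ)+2)) ^ (i + 2) * |x| ^ (i+2) := by rw [← mul_pow]; ring_nf
    _ ≤ (1 / ((j:ℝ)+2)) ^ 2 * |x| ^ (i+2) := by
        apply mul_le_mul_of_nonneg_right _ (by positivity)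
        apply pow_le_pow_of_le_one (by positivity) _ (by omega)
        rw [div_le_one hj]; linarith [Nat.cast_nonneg (α := ℝ) j]

lemma hj1 (i : ℕ) : ∑' j : ℕ, 1 / ((j:ℝ) + 2) ^ (i + 2) = zr (i+2) - 1 := by
  have hsum : Summable (fun k : ℕ => 1 / ((k:ℝ) + 1) ^ (i + 2)) := summable_zr_fun (by omega)
  have h0 := Summable.tsum_eq_zero_add hsum
  have h2 : ∑' (b : ℕ), 1 / ((↑(b+1):ℝ) + 1) ^ (i+2) = ∑' j : ℕ, 1 / ((j:ℝ) + 2) ^ (i + 2) :=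
    tsum_congr fun b => by push_cast; ring_nf
  rw [h2] at h0
  rw [zr]
  simp only [one_div] at h0 ⊢
  norm_num at h0
  linarith

lemma lemD {x : ℝ} (i : ℕ) :
    ∑' j : ℕ, (x / ((j:ℝ) + 2)) ^ (i + 2) / ((i:ℝ) + 2)
      = x ^ (i + 2) * (zr (i + 2) - 1) / ((i:ℝ) + 2) := by
  rw [show (fun j : ℕ => (x / ((j:ℝ) + 2)) ^ (i + 2) / ((i:ℝ) + 2))
      = fun j : ℕ => (x ^ (i+2) / ((i:ℝ)+2)) * (1 / ((j:ℝ) + 2) ^ (i + 2)) by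
    funext j; rw [div_pow]; ring]
  rw [tsum_mul_left, hj1]
  ring
lemma hyabs {x : ℝ} (hx : |x| < 1) (j : ℕ) : |x / (j + 2 : ℝ)| < 1 := by
  rw [abs_div]
  have h2 : (0:ℝ) < (j:ℝ) + 2 := by positivity
  rw [abs_of_pos h2, div_lt_one h2]
  have : (1:ℝ) ≤ (j:ℝ) + 2 := by linarith [Nat.cast_nonneg (α := ℝ) j]
  linarith

lemma lemA {x : ℝ} (hx : |x| < 1) (j : ℕ) :
    HasSum (fun i : ℕ => (x / (j + 2 : ℝ)) ^ (i + 2) / (i + 2))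
      (-(Real.log (1 - x / (j + 2)) + x / (j + 2))) := by
  have h0 := Real.hasSum_pow_div_log_of_abs_lt_one (hyabs hx j)
  have h1 := (hasSum_nat_add_iff' (f := fun i : ℕ => (x / ((j:ℝ)+2)) ^ (i + 1) / ((i:ℝ) + 1)) 1).mpr h0
  simp only [Finset.range_one, Finset.sum_singleton, Nat.cast_zero, pow_one, zero_add] at h1
  convert h1 using 1
  · rfl
  · funext i; push_cast; ring_nf
  · ring

lemma log_gammaSeq_formula {x : ℝ} (hx : |x| < 1) {n : ℕ} (hn : 1 ≤ n) :
    Real.log (Real.GammaSeq (1 - x) n)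
      = -Real.log (1 - x) + ((1 - x) * Real.log n - Real.log ((n:ℝ) + 1))
        + x * (∑ j ∈ range n, 1 / ((j:ℝ) + 2))
        - ∑ j ∈ range n, (Real.log (1 - x / ((j:ℝ) + 2)) + x / ((j:ℝ) + 2)) := by
  obtain ⟨hx1, hx2⟩ := abs_lt.mp hx
  have hs : (0:ℝ) < 1 - x := by linarith
  have hnpos : (0:ℝ) < n := by exact_mod_cast hn
  have hterm : ∀ j : ℕ, (0:ℝ) < 1 - x + j := fun j => by
    have := Nat.cast_nonneg (α := ℝ) j; linarith
  have hprodpos : (0:ℝ) < ∏ j ∈ range (n+1), (1 - x + (j:ℝ)) :=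
    Finset.prod_pos fun j _ => hterm j
  have hfact : Real.log ((Nat.factorial n : ℕ) : ℝ) = ∑ j ∈ range n, Real.log ((j:ℝ) + 1) := by
    rw [← Finset.prod_range_add_one_eq_factorial]
    push_cast
    rw [Real.log_prod (fun j _ => by positivity)]
  rw [Real.GammaSeq, Real.log_div (by positivity) hprodpos.ne',
    Real.log_mul (by positivity) (by positivity), Real.log_rpow hnpos,
    Real.log_prod (fun j _ => (hterm j).ne'), hfact, Finset.sum_range_succ']
  have e2 : ∑ j ∈ range n, Real.log (1 - x + ((j:ℕ) + 1 : ℕ))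
      = ∑ j ∈ range n, (Real.log ((j:ℝ) + 2) + Real.log (1 - x / ((j:ℝ) + 2))) := by
    refine Finset.sum_congr rfl fun j _ => ?_
    have hj2 : (0:ℝ) < (j:ℝ) + 2 := by positivity
    have hy : (0:ℝ) < 1 - x / ((j:ℝ) + 2) := by
      have h := abs_lt.mp (by
        rw [abs_div]
        rw [abs_of_pos hj2, div_lt_one hj2]
        have : (1:ℝ) ≤ (j:ℝ) + 2 := by linarith [Nat.cast_nonneg (α := ℝ) j]
        linarith : |x / ((j:ℝ) + 2)| < 1)
      linarith [h.2]
    rw [← Real.log_mul hj2.ne' hy.ne']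
    congr 1
    push_cast
    field_simp
    ring
  rw [e2]
  have e3 : ∑ j ∈ range n, (Real.log ((j:ℝ) + 1) - Real.log ((j:ℝ) + 2))
      = -Real.log ((n:ℝ) + 1) := by
    have h := Finset.sum_range_sub' (f := fun i : ℕ => Real.log ((i:ℝ) + 1)) n
    have h2 : ∑ j ∈ range n, (Real.log ((j:ℝ) + 1) - Real.log ((j:ℝ) + 2))
        = ∑ i ∈ range n, (Real.log ((i:ℝ) + 1) - Real.log ((↑(i+1):ℝ) + 1)) := by
      refine Finset.sum_congr rfl fun j _ => ?_
      push_cast; ring_nf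
    rw [h2, h]
    norm_num
  rw [Finset.sum_add_distrib, Finset.sum_add_distrib] at *
  have e4 : ∑ j ∈ range n, x / ((j:ℝ) + 2) = x * ∑ j ∈ range n, 1 / ((j:ℝ) + 2) := by
    rw [Finset.mul_sum]
    refine Finset.sum_congr rfl fun j _ => ?_
    ring
  rw [e4]
  rw [Finset.sum_sub_distrib] at e3
  push_cast
  simp only [add_zero]
  linarith [e3]

lemma t1_log : Tendsto (fun n : ℕ => Real.log n - Real.log ((n:ℝ) + 1)) atTop (𝓝 0) := by
  have h1 : Tendsto (fun n : ℕ => (n:ℝ) / ((n:ℝ) + 1)) atTop (𝓝 1) := by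
    simpa using tendsto_natCast_div_add_atTop (𝕜 := ℝ) (1:ℝ)
  have h2 := (Real.continuousAt_log one_ne_zero).tendsto.comp h1
  rw [Real.log_one] at h2
  apply h2.congr'
  filter_upwards [eventually_ge_atTop 1] with n hn
  have hn' : (0:ℝ) < n := by exact_mod_cast hn
  simp only [Function.comp_apply]
  rw [Real.log_div hn'.ne' (by positivity)]

lemma t2_harm : Tendsto (fun n : ℕ => (harmonic (n+1) : ℝ) - Real.log ((n:ℝ) + 1)) atTop
    (𝓝 Real.eulerMascheroniConstant) := by
  have h := Real.tendsto_harmonic_sub_log.comp (tendsto_add_atTop_nat 1)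
  apply h.congr
  intro n
  simp only [Function.comp_apply]
  push_cast
  ring

lemma harm_sum (n : ℕ) : (harmonic (n+1) : ℝ) = ∑ j ∈ range n, 1 / ((j:ℝ) + 2) + 1 := by
  have h1 : (harmonic (n+1) : ℝ) = ∑ i ∈ range (n+1), 1 / ((i:ℝ) + 1) := by
    rw [harmonic]
    push_cast
    refine Finset.sum_congr rfl fun i _ => ?_
    rw [one_div]
  rw [h1, Finset.sum_range_succ']
  have : ∑ j ∈ range n, 1 / ((↑(j+1):ℝ) + 1) = ∑ j ∈ range n, 1 / ((j:ℝ) + 2) := by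
    refine Finset.sum_congr rfl fun j _ => ?_
    push_cast; ring_nf
  rw [this]
  norm_num
lemma hr_summable {x : ℝ} (hx : |x| < 1) :
    Summable (fun j : ℕ => Real.log (1 - x / ((j:ℝ) + 2)) + x / ((j:ℝ) + 2)) := by
  have hF := hFsummable hx
  have hprod := hF.prod
  have : (fun j : ℕ => Real.log (1 - x / ((j:ℝ) + 2)) + x / ((j:ℝ) + 2))
      = fun j : ℕ => -(∑' i : ℕ, (x / ((j:ℝ) + 2)) ^ (i + 2) / ((i:ℝ) + 2)) := by
    funext j
    rw [(lemA hx j).tsum_eq]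
    ring
  rw [this]
  exact hprod.neg

lemma key1 {x : ℝ} (hx : |x| < 1) :
    Real.log (Real.Gamma (1 - x))
      = -Real.log (1 - x) + Real.eulerMascheroniConstant * x - x
        - ∑' j : ℕ, (Real.log (1 - x / ((j:ℝ) + 2)) + x / ((j:ℝ) + 2)) := by
  obtain ⟨hx1, hx2⟩ := abs_lt.mp hx
  have hs : (0:ℝ) < 1 - x := by linarith
  have hGpos : 0 < Real.Gamma (1 - x) := Real.Gamma_pos_of_pos hs
  have hleft : Tendsto (fun n : ℕ => Real.log (Real.GammaSeq (1 - x) n)) atTop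
      (𝓝 (Real.log (Real.Gamma (1 - x)))) :=
    ((Real.continuousAt_log hGpos.ne').tendsto).comp (Real.GammaSeq_tendsto_Gamma (1 - x))
  have t3 := (hr_summable hx).hasSum.tendsto_sum_nat
  have tE : Tendsto (fun n : ℕ =>
      -Real.log (1 - x) + ((1 - x) * (Real.log n - Real.log ((n:ℝ) + 1))
        + (x * ((harmonic (n+1) : ℝ) - Real.log ((n:ℝ) + 1)) - x))
        - ∑ j ∈ range n, (Real.log (1 - x / ((j:ℝ) + 2)) + x / ((j:ℝ) + 2))) atTop
      (𝓝 (-Real.log (1 - x) + ((1 - x) * 0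
        + (x * Real.eulerMascheroniConstant - x))
        - ∑' j : ℕ, (Real.log (1 - x / ((j:ℝ) + 2)) + x / ((j:ℝ) + 2)))) :=
    (tendsto_const_nhds.add ((t1_log.const_mul (1 - x)).add
      ((t2_harm.const_mul x).sub_const x))).sub t3
  have hEq : (fun n : ℕ => Real.log (Real.GammaSeq (1 - x) n)) =ᶠ[atTop] (fun n : ℕ =>
      -Real.log (1 - x) + ((1 - x) * (Real.log n - Real.log ((n:ℝ) + 1))
        + (x * ((harmonic (n+1) : ℝ) - Real.log ((n:ℝ) + 1)) - x))
        - ∑ j ∈ range n, (Real.log (1 - x / ((j:ℝ) + 2)) + x / ((j:ℝ) + 2))) := by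
    filter_upwards [eventually_ge_atTop 1] with n hn
    rw [log_gammaSeq_formula hx hn, harm_sum n]
    ring
  have hright := tE.congr' hEq.symm
  have := tendsto_nhds_unique hleft hright
  rw [this]
  ring
lemma zr_le_zr_two {m : ℕ} (hm : 2 ≤ m) : zr m ≤ zr 2 := by
  refine Summable.tsum_le_tsum (fun k => ?_) (summable_zr_fun hm) (summable_zr_fun le_rfl)
  have h1 : (1 : ℝ) ≤ (k + 1 : ℝ) := by simp [Nat.cast_nonneg]
  exact one_div_le_one_div_of_le (by positivity) (pow_le_pow_right₀ h1 hm)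

lemma one_le_zr {m : ℕ} (hm : 2 ≤ m) : 1 ≤ zr m := by
  have h := Summable.le_tsum (summable_zr_fun hm) 0 (fun j _ => by positivity)
  rw [zr]
  simpa [one_div] using h

lemma hasSum_logGamma {x : ℝ} (hx : |x| < 1) :
    HasSum (fun n : ℕ => zr (n + 2) * x ^ (n + 2) / ((n:ℝ) + 2))
      (Real.log (Real.Gamma (1 - x)) - Real.eulerMascheroniConstant * x) := by
  have hgsummable : Summable (fun i : ℕ => x ^ (i+2) * (zr (i+2) - 1) / ((i:ℝ) + 2)) := by
    refine Summable.of_norm_bounded (g := fun i : ℕ => zr 2 * |x| ^ (i+2))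
      ((hgeo hx).mul_left (zr 2)) fun i => ?_
    have h1 : (0:ℝ) ≤ zr (i+2) - 1 := by linarith [one_le_zr (m := i+2) (by omega)]
    have h2 : zr (i+2) - 1 ≤ zr 2 := by
      linarith [zr_le_zr_two (m := i+2) (by omega), one_le_zr (m := 2) le_rfl]
    have hi2 : (1:ℝ) ≤ (i:ℝ) + 2 := by linarith [Nat.cast_nonneg (α := ℝ) i]
    rw [Real.norm_eq_abs, abs_div, abs_mul, abs_pow, abs_of_nonneg h1,
      abs_of_pos (by linarith : (0:ℝ) < (i:ℝ) + 2)]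
    calc |x| ^ (i+2) * (zr (i+2) - 1) / ((i:ℝ) + 2) ≤ |x| ^ (i+2) * (zr (i+2) - 1) :=
          div_le_self (by positivity) hi2
      _ ≤ |x| ^ (i+2) * zr 2 := by apply mul_le_mul_of_nonneg_left h2 (by positivity)
      _ = zr 2 * |x| ^ (i+2) := by ring
  have h_tsum_g : ∑' i : ℕ, x ^ (i+2) * (zr (i+2) - 1) / ((i:ℝ) + 2)
      = -∑' j : ℕ, (Real.log (1 - x / ((j:ℝ) + 2)) + x / ((j:ℝ) + 2)) := by
    have e1 : ∑' i : ℕ, x ^ (i+2) * (zr (i+2) - 1) / ((i:ℝ) + 2)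
        = ∑' (i : ℕ) (j : ℕ), (x / ((j:ℝ) + 2)) ^ (i + 2) / ((i:ℝ) + 2) :=
      tsum_congr fun i => (lemD i).symm
    have e2 : ∑' (i : ℕ) (j : ℕ), (x / ((j:ℝ) + 2)) ^ (i + 2) / ((i:ℝ) + 2)
        = ∑' (j : ℕ) (i : ℕ), (x / ((j:ℝ) + 2)) ^ (i + 2) / ((i:ℝ) + 2) :=
      Summable.tsum_comm (hFsummable hx)
    have e3 : ∑' (j : ℕ) (i : ℕ), (x / ((j:ℝ) + 2)) ^ (i + 2) / ((i:ℝ) + 2)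
        = ∑' j : ℕ, -(Real.log (1 - x / ((j:ℝ) + 2)) + x / ((j:ℝ) + 2)) :=
      tsum_congr fun j => (lemA hx j).tsum_eq
    rw [e1, e2, e3, tsum_neg]
  have key2 : HasSum (fun i : ℕ => x ^ (i+2) * (zr (i+2) - 1) / ((i:ℝ) + 2))
      (-∑' j : ℕ, (Real.log (1 - x / ((j:ℝ) + 2)) + x / ((j:ℝ) + 2))) :=
    (Summable.hasSum_iff hgsummable).mpr h_tsum_g
  have key3 : HasSum (fun i : ℕ => x ^ (i + 2) / ((i:ℝ) + 2)) (-Real.log (1 - x) - x) := by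
    have h0 := Real.hasSum_pow_div_log_of_abs_lt_one hx
    have h1 := (hasSum_nat_add_iff' (f := fun i : ℕ => x ^ (i + 1) / ((i:ℝ) + 1)) 1).mpr h0
    simp only [Finset.range_one, Finset.sum_singleton, Nat.cast_zero, pow_one, zero_add] at h1
    convert h1 using 1
    · rfl
    · funext i; push_cast; ring_nf
    · ring
  have hsum := key2.add key3
  have hfun : (fun i : ℕ => x ^ (i+2) * (zr (i+2) - 1) / ((i:ℝ) + 2) + x ^ (i+2) / ((i:ℝ) + 2))
      = fun i : ℕ => zr (i + 2) * x ^ (i + 2) / ((i:ℝ) + 2) := by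
    funext i; ring
  rw [hfun] at hsum
  convert hsum using 1
  rw [key1 hx]
  ring
lemma zr_nonneg {m : ℕ} : 0 ≤ zr m := tsum_nonneg fun k => by positivity

lemma harmonic_cast_le (n : ℕ) : (harmonic n : ℝ) ≤ (n : ℝ) := by
  have h1 : (harmonic n : ℝ) = ∑ i ∈ range n, 1 / ((i:ℝ) + 1) := by
    rw [harmonic]; push_cast
    exact Finset.sum_congr rfl fun i _ => by rw [one_div]
  rw [h1]
  calc ∑ i ∈ range n, 1 / ((i:ℝ) + 1) ≤ ∑ i ∈ range n, 1 := by
        refine Finset.sum_le_sum fun i _ => ?_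
        rw [div_le_one (by positivity)]
        linarith [Nat.cast_nonneg (α := ℝ) i]
    _ = (n : ℝ) := by simp

lemma harmonic_cast_nonneg (n : ℕ) : (0:ℝ) ≤ (harmonic n : ℝ) := by
  have h1 : (harmonic n : ℝ) = ∑ i ∈ range n, 1 / ((i:ℝ) + 1) := by
    rw [harmonic]; push_cast
    exact Finset.sum_congr rfl fun i _ => by rw [one_div]
  rw [h1]
  positivity

lemma real_version {x : ℝ} (hx : |x| < 1) :
    ∑' n : ℕ, (harmonic (n+2) : ℝ) * (zr (n+2) - x * zr (n+3)) * x ^ (n+2)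
      = zr 2 * x ^ 2 - Real.eulerMascheroniConstant * x + Real.log (Real.Gamma (1 - x)) := by
  have hb : HasSum (fun n : ℕ => zr (n+3) * x ^ (n+3) / ((n:ℝ) + 3))
      (Real.log (Real.Gamma (1-x)) - Real.eulerMascheroniConstant * x - zr 2 * x ^ 2 / 2) := by
    have h0 := hasSum_logGamma hx
    have h1 := (hasSum_nat_add_iff'
      (f := fun n : ℕ => zr (n+2) * x ^ (n+2) / ((n:ℝ)+2)) 1).mpr h0
    simp only [Finset.range_one, Finset.sum_singleton, Nat.cast_zero] at h1
    convert h1 using 1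
    · rfl
    · funext n
      have e : n + 1 + 2 = n + 3 := rfl
      rw [e]
      push_cast
      ring_nf
    · push_cast; ring
  set a : ℕ → ℝ := fun n => (harmonic (n+2) : ℝ) * zr (n+2) * x ^ (n+2) with ha_def
  have ha_sum : Summable a := by
    have s1 : Summable (fun n : ℕ => (n:ℝ) * |x| ^ n) := by
      simpa using summable_pow_mul_geometric_of_norm_lt_one 1
        (r := |x|) (by rwa [Real.norm_eq_abs, abs_abs])
    have s2 : Summable (fun n : ℕ => |x| ^ n) := summable_geometric_of_lt_one (abs_nonneg x) hx
    have s3 : Summable (fun n : ℕ => zr 2 * |x| ^ 2 * (((n:ℝ) + 2) * |x| ^ n)) := by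
      refine Summable.mul_left _ ?_
      refine (s1.add (s2.mul_left 2)).congr fun n => ?_
      ring
    refine Summable.of_norm_bounded s3 fun n => ?_
    have hH := harmonic_cast_le (n+2)
    have hH0 := harmonic_cast_nonneg (n+2)
    have hz2 := zr_le_zr_two (m := n+2) (by omega)
    rw [Real.norm_eq_abs, ha_def]
    simp only []
    rw [abs_mul, abs_mul, abs_pow, abs_of_nonneg hH0, abs_of_nonneg (zr_nonneg (m := n+2))]
    calc (harmonic (n+2) : ℝ) * zr (n+2) * |x| ^ (n+2) ≤ ((n:ℝ)+2) * zr 2 * |x| ^ (n+2) := by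
          apply mul_le_mul_of_nonneg_right _ (by positivity)
          apply mul_le_mul (by push_cast at hH ⊢; linarith) hz2 (zr_nonneg) (by positivity)
      _ = zr 2 * |x| ^ 2 * (((n:ℝ) + 2) * |x| ^ n) := by ring
  have ha_shift : Summable (fun n : ℕ => a (n+1)) := (summable_nat_add_iff 1).mpr ha_sum
  have hdiff : Summable (fun n : ℕ => a n - a (n+1)) := ha_sum.sub ha_shift
  have htel : ∑' n : ℕ, (a n - a (n+1)) = a 0 := by
    rw [Summable.tsum_sub ha_sum ha_shift, Summable.tsum_eq_zero_add ha_sum]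
    ring
  have hterm : ∀ n : ℕ, (harmonic (n+2):ℝ) * (zr (n+2) - x * zr (n+3)) * x ^ (n+2)
      = (a n - a (n+1)) + zr (n+3) * x ^ (n+3) / ((n:ℝ)+3) := by
    intro n
    have hh : (harmonic (n+3) : ℝ) = (harmonic (n+2):ℝ) + 1/((n:ℝ)+3) := by
      have h := harmonic_succ (n+2)
      rw [show n+3 = n+2+1 from rfl, h]
      push_cast
      ring
    rw [ha_def]
    simp only []
    rw [show n+1+2 = n+3 from rfl, hh]
    have h3 : ((n:ℝ)+3) ≠ 0 := by positivity
    field_simp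
    ring
  have harm2 : (harmonic 2 : ℝ) = 3/2 := by
    rw [harmonic, Finset.sum_range_succ, Finset.sum_range_succ]
    norm_num
  calc ∑' n : ℕ, (harmonic (n+2):ℝ) * (zr (n+2) - x * zr (n+3)) * x ^ (n+2)
      = ∑' n : ℕ, ((a n - a (n+1)) + zr (n+3) * x ^ (n+3) / ((n:ℝ)+3)) := tsum_congr hterm
    _ = (∑' n : ℕ, (a n - a (n+1))) + ∑' n : ℕ, zr (n+3) * x ^ (n+3) / ((n:ℝ)+3) :=
        Summable.tsum_add hdiff hb.summable
    _ = a 0 + (Real.log (Real.Gamma (1-x)) - Real.eulerMascheroniConstant * x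
          - zr 2 * x ^ 2 / 2) := by rw [htel, hb.tsum_eq]
    _ = zr 2 * x ^ 2 - Real.eulerMascheroniConstant * x + Real.log (Real.Gamma (1 - x)) := by
        rw [ha_def]
        simp only []
        rw [harm2]
        norm_num
        ring
lemma riemannZeta_nat {m : ℕ} (hm : 2 ≤ m) : riemannZeta (m : ℂ) = ((zr m : ℝ) : ℂ) := by
  rw [zeta_eq_tsum_one_div_nat_add_one_cpow
    (by simp only [Complex.natCast_re]
        exact_mod_cast lt_of_lt_of_le one_lt_two (by exact_mod_cast hm))]
  rw [zr, Complex.ofReal_tsum]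
  congr 1; ext k
  rw [show ((k : ℂ) + 1) ^ (m : ℂ) = ((k : ℂ) + 1) ^ (m : ℕ) by rw [Complex.cpow_natCast]]
  push_cast
  ring

theorem harmonic_zeta_power_series (x : ℝ) (hx : |x| < 1) :
    ∑' n : ℕ, (harmonic (n + 2) : ℂ) *
        (riemannZeta ((n : ℂ) + 2) - (x : ℂ) * riemannZeta ((n : ℂ) + 3)) * (x : ℂ) ^ (n + 2) =
      riemannZeta 2 * (x : ℂ) ^ 2 - (Real.eulerMascheroniConstant : ℂ) * (x : ℂ) +
        Complex.log (Complex.Gamma (1 - (x : ℂ))) := by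
  have hs : (0:ℝ) < 1 - x := by
    obtain ⟨h1, h2⟩ := abs_lt.mp hx; linarith
  have h1 : ∀ n : ℕ, riemannZeta ((n:ℂ) + 2) = ((zr (n+2) : ℝ) : ℂ) := fun n => by
    rw [show ((n:ℂ) + 2) = ((n+2 : ℕ) : ℂ) by push_cast; ring, riemannZeta_nat (by omega)]
  have h1' : ∀ n : ℕ, riemannZeta ((n:ℂ) + 3) = ((zr (n+3) : ℝ) : ℂ) := fun n => by
    rw [show ((n:ℂ) + 3) = ((n+3 : ℕ) : ℂ) by push_cast; ring, riemannZeta_nat (by omega)]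
  have h2 : riemannZeta 2 = ((zr 2 : ℝ) : ℂ) := by
    rw [show (2:ℂ) = ((2:ℕ) : ℂ) by norm_num, riemannZeta_nat le_rfl]
  have hG : Complex.log (Complex.Gamma (1 - (x:ℂ)))
      = ((Real.log (Real.Gamma (1 - x)) : ℝ) : ℂ) := by
    rw [show (1 - (x:ℂ)) = ((1 - x : ℝ) : ℂ) by push_cast; ring, Complex.Gamma_ofReal,
      Complex.ofReal_log (Real.Gamma_pos_of_pos hs).le]
  calc ∑' n : ℕ, (harmonic (n + 2) : ℂ) *
        (riemannZeta ((n : ℂ) + 2) - (x : ℂ) * riemannZeta ((n : ℂ) + 3)) * (x : ℂ) ^ (n + 2)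
      = ∑' n : ℕ, (((harmonic (n+2) : ℝ) * (zr (n+2) - x * zr (n+3)) * x ^ (n+2) : ℝ) : ℂ) := by
        refine tsum_congr fun n => ?_
        rw [h1 n, h1' n]
        push_cast
        ring
    _ = ((∑' n : ℕ, (harmonic (n+2) : ℝ) * (zr (n+2) - x * zr (n+3)) * x ^ (n+2) : ℝ) : ℂ) :=
        (Complex.ofReal_tsum _).symm
    _ = ((zr 2 * x ^ 2 - Real.eulerMascheroniConstant * x
          + Real.log (Real.Gamma (1 - x)) : ℝ) : ℂ) := by rw [real_version hx]
    _ = riemannZeta 2 * (x : ℂ) ^ 2 - (Real.eulerMascheroniConstant : ℂ) * (x : ℂ) +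
        Complex.log (Complex.Gamma (1 - (x : ℂ))) := by
        rw [h2, hG]
        push_cast
        ring
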